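/- Let E be a measurable space, μ a probability measure on E, and κ a Markov kernel on E acting on bounded measurable functions by (κ g)(x) = ∫_E g(y) κ(x,dy). Suppose that ‖κ g‖_{L²(μ)} ≤ ‖g‖_{L^{4/3}(μ)} for every bounded measurable g : E → ℝ. Then for every N ≥ 1 the N-fold product kernel κ^{⊗N} on E^N, defined by κ^{⊗N}((x₁,…,x_N),·) = κ(x₁,·) ⊗ ⋯ ⊗ κ(x_N,·), satisfies ‖κ^{⊗N} G‖_{L²(μ^{⊗N})} ≤ ‖G‖_{L^{4/3}(μ^{⊗N})} for every bounded measurable G : E^N → ℝ, where μ^{⊗N} is the N-fold product of μ. -/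

import Mathlib

open MeasureTheory ProbabilityTheory
open scoped ENNReal NNReal

/-- A bounded measurable real-valued function. -/
def BddMeasurableFn {E : Type*} [MeasurableSpace E] (f : E → ℝ) : Prop :=
  Measurable f ∧ ∃ C : ℝ, ∀ x, |f x| ≤ C

open Function in
section
section Helpers
variable {E : Type*} [MeasurableSpace E]

lemma measurable_finCons {N : ℕ} :
    Measurable fun q : E × (Fin N → E) => (Fin.cons q.1 q.2 : Fin (N + 1) → E) := by
  refine measurable_pi_iff.2 fun i => ?_
  induction i using Fin.cases with
  | zero => simpa using measurable_fst
  | succ j => simp only [Fin.cons_succ]; exact (measurable_pi_apply j).comp measurable_snd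

lemma integrable_of_bdd {α : Type*} [MeasurableSpace α] {ν : Measure α} [IsFiniteMeasure ν]
    {f : α → ℝ} (hm : Measurable f) {C : ℝ} (hC : ∀ x, |f x| ≤ C) : Integrable f ν :=
  (integrable_const C).mono' hm.aestronglyMeasurable
    (Filter.Eventually.of_forall fun x => by simpa [Real.norm_eq_abs] using hC x)

lemma abs_integral_le_bdd {α : Type*} [MeasurableSpace α] {ν : Measure α}
    [IsProbabilityMeasure ν] {f : α → ℝ} (hm : Measurable f) {C : ℝ} (hC : ∀ x, |f x| ≤ C) :
    |∫ x, f x ∂ν| ≤ C := by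
  calc |∫ x, f x ∂ν| ≤ ∫ x, |f x| ∂ν := by simpa [Real.norm_eq_abs] using norm_integral_le_integral_norm f
    _ ≤ ∫ _x, C ∂ν := integral_mono (integrable_of_bdd hm hC).abs (integrable_const C)
          fun x => hC x
    _ = C := by simp

lemma lintegral_pi_succ {N : ℕ} (m : Fin (N + 1) → Measure E) [∀ i, IsProbabilityMeasure (m i)]
    {f : (Fin (N + 1) → E) → ℝ≥0∞} (hf : Measurable f) :
    ∫⁻ x, f x ∂(Measure.pi m)
      = ∫⁻ t, ∫⁻ y, f (Fin.cons t y) ∂(Measure.pi fun i => m i.succ) ∂(m 0) := by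
  have hmp := measurePreserving_piFinSuccAbove m 0
  set e := MeasurableEquiv.piFinSuccAbove (fun _ : Fin (N + 1) => E) 0 with he
  have hsymm : ∀ p : E × (Fin N → E), e.symm p = Fin.cons p.1 p.2 := by
    intro p
    simp [he, MeasurableEquiv.piFinSuccAbove, Fin.insertNthEquiv, Fin.insertNth_zero']
  have h1 : ∫⁻ x, f x ∂(Measure.pi m)
      = ∫⁻ p, f (e.symm p) ∂((m 0).prod (Measure.pi fun i => m i.succ)) := by
    have key := hmp.lintegral_comp (f := fun p => f (e.symm p)) (hf.comp e.symm.measurable)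
    simp only [MeasurableEquiv.symm_apply_apply] at key
    simp only [Fin.zero_succAbove] at key
    exact key
  rw [h1, lintegral_prod (fun p => f (e.symm p)) ((hf.comp e.symm.measurable).aemeasurable)]
  simp only [hsymm]

lemma integral_pi_succ {N : ℕ} (m : Fin (N + 1) → Measure E) [∀ i, IsProbabilityMeasure (m i)]
    {G : (Fin (N + 1) → E) → ℝ} (hG : Measurable G) {C : ℝ} (hC : ∀ x, |G x| ≤ C) :
    ∫ x, G x ∂(Measure.pi m)
      = ∫ t, ∫ y, G (Fin.cons t y) ∂(Measure.pi fun i => m i.succ) ∂(m 0) := by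
  have hmp := measurePreserving_piFinSuccAbove m 0
  set e := MeasurableEquiv.piFinSuccAbove (fun _ : Fin (N + 1) => E) 0 with he
  have hsymm : ∀ p : E × (Fin N → E), e.symm p = Fin.cons p.1 p.2 := by
    intro p
    simp [he, MeasurableEquiv.piFinSuccAbove, Fin.insertNthEquiv, Fin.insertNth_zero']
  have h1 : ∫ x, G x ∂(Measure.pi m)
      = ∫ p, G (e.symm p) ∂((m 0).prod (Measure.pi fun i => m i.succ)) := by
    have key := hmp.integral_comp e.measurableEmbedding (fun p => G (e.symm p))
    simp only [MeasurableEquiv.symm_apply_apply] at key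
    simp only [Fin.zero_succAbove] at key
    exact key
  rw [h1, integral_prod (fun p => G (e.symm p)) (integrable_of_bdd (hG.comp e.symm.measurable)
    (fun p => hC (e.symm p)))]
  simp only [hsymm]

end Helpers

universe u

lemma minkowski_lintegral {α β : Type*} [MeasurableSpace α] [MeasurableSpace β]
    (μ : Measure α) (ν : Measure β) [IsFiniteMeasure μ] [IsFiniteMeasure ν]
    {p q : ℝ} (hpq : p.HolderConjugate q)
    {f : α → β → ℝ≥0∞} (hf : Measurable (Function.uncurry f))
    (C : ℝ≥0) (hC : ∀ x y, f x y ≤ C) :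
    (∫⁻ x, (∫⁻ y, f x y ∂ν) ^ p ∂μ) ^ (1/p) ≤ ∫⁻ y, (∫⁻ x, f x y ^ p ∂μ) ^ (1/p) ∂ν := by
  set A := ∫⁻ x, (∫⁻ y, f x y ∂ν) ^ p ∂μ with hA
  set B := ∫⁻ y, (∫⁻ x, f x y ^ p ∂μ) ^ (1/p) ∂ν with hB
  have hmeas_int : Measurable fun x => ∫⁻ y, f x y ∂ν :=
    (Measurable.lintegral_prod_right' (f := Function.uncurry f) hf)
  have hA_top : A ≠ ∞ := by
    have hle : A ≤ ((C : ℝ≥0∞) * ν Set.univ) ^ p * μ Set.univ := by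
      calc A ≤ ∫⁻ _x, ((C : ℝ≥0∞) * ν Set.univ) ^ p ∂μ := by
              refine lintegral_mono fun x => ?_
              refine ENNReal.rpow_le_rpow ?_ hpq.nonneg
              calc ∫⁻ y, f x y ∂ν ≤ ∫⁻ _y, (C : ℝ≥0∞) ∂ν := lintegral_mono fun y => hC x y
                _ = (C : ℝ≥0∞) * ν Set.univ := lintegral_const _
        _ = ((C : ℝ≥0∞) * ν Set.univ) ^ p * μ Set.univ := lintegral_const _
    refine ne_top_of_le_ne_top ?_ hle
    exact ENNReal.mul_ne_top (ENNReal.rpow_ne_top_of_nonneg hpq.nonneg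
      (ENNReal.mul_ne_top ENNReal.coe_ne_top (measure_ne_top ν _))) (measure_ne_top μ _)
  by_cases hA0 : A = 0
  · rw [hA0, ENNReal.zero_rpow_of_pos hpq.one_div_pos]; exact zero_le
  have key : A ≤ A ^ (1/q) * B := by
    have step1 : A = ∫⁻ y, ∫⁻ x, (∫⁻ y', f x y' ∂ν) ^ (p - 1) * f x y ∂μ ∂ν := by
      rw [hA]
      rw [← lintegral_lintegral_swap]
      · refine lintegral_congr fun x => ?_
        have : (∫⁻ y, f x y ∂ν) ^ p
            = (∫⁻ y, f x y ∂ν) ^ (p - 1) * (∫⁻ y, f x y ∂ν) ^ (1 : ℝ) := by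
          rw [← ENNReal.rpow_add_of_nonneg _ _ (le_of_lt hpq.sub_one_pos) zero_le_one]
          norm_num
        rw [this, ENNReal.rpow_one, ← lintegral_const_mul _ (hf.of_uncurry_left)]
      · exact ((hmeas_int.comp measurable_fst).pow_const _ |>.mul hf).aemeasurable
    have step2 : ∀ y : β, ∫⁻ x, (∫⁻ y', f x y' ∂ν) ^ (p - 1) * f x y ∂μ
        ≤ A ^ (1/q) * (∫⁻ x, f x y ^ p ∂μ) ^ (1/p) := by
      intro y
      have hHold := ENNReal.lintegral_mul_le_Lp_mul_Lq (μ := μ) hpq.symm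
        (f := fun x => (∫⁻ y', f x y' ∂ν) ^ (p - 1)) (g := fun x => f x y)
        ((hmeas_int.pow_const (p - 1)).aemeasurable)
        (hf.of_uncurry_right.aemeasurable)
      refine le_trans hHold ?_
      have : ∀ x : α, ((∫⁻ y', f x y' ∂ν) ^ (p - 1)) ^ q = (∫⁻ y', f x y' ∂ν) ^ p := by
        intro x
        rw [← ENNReal.rpow_mul, hpq.sub_one_mul_conj]
      simp only [this]
      exact le_of_eq rfl
    calc A = ∫⁻ y, ∫⁻ x, (∫⁻ y', f x y' ∂ν) ^ (p - 1) * f x y ∂μ ∂ν := step1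
      _ ≤ ∫⁻ y, A ^ (1/q) * (∫⁻ x, f x y ^ p ∂μ) ^ (1/p) ∂ν := lintegral_mono step2
      _ = A ^ (1/q) * B := lintegral_const_mul _ (by
          exact (Measurable.lintegral_prod_left (f := fun x y => f x y ^ p) (hf.pow_const p)).pow_const _)
  have hApow : A ^ (1/p) = A / A ^ (1/q) := by
    have h1 : (1:ℝ)/p = 1 - 1/q := by
      have := hpq.inv_add_inv_eq_one
      rw [one_div, one_div]; linarith
    rw [h1, ENNReal.rpow_sub _ _ hA0 hA_top, ENNReal.rpow_one]
  rw [hApow]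
  exact ENNReal.div_le_of_le_mul (by rwa [mul_comm] at key)

lemma measurable_pi_kernel_integral {E α : Type u} [MeasurableSpace E] [MeasurableSpace α]
    (κ : Kernel E E) [IsMarkovKernel κ] :
    ∀ (N : ℕ) (f : α → (Fin N → E) → ℝ) (g : α → Fin N → E) (C : ℝ),
      Measurable (Function.uncurry f) → Measurable g → (∀ a y, |f a y| ≤ C) →
      Measurable fun a => ∫ y, f a y ∂(Measure.pi fun i => κ (g a i))
  | 0, f, g, C, hf, hg, hC => by
      have hconst : (fun a => ∫ y, f a y ∂(Measure.pi fun i => κ (g a i)))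
          = fun a => f a default := by
        funext a
        have h1 : (fun y => f a y) = fun _ => f a default :=
          funext fun y => by rw [Subsingleton.elim y default]
        rw [h1, integral_const]
        simp
      rw [hconst]
      exact hf.comp (measurable_id.prodMk measurable_const)
  | (N + 1), f, g, C, hf, hg, hC => by
      have hg0 : Measurable fun a => g a 0 := (measurable_pi_apply 0).comp hg
      have hΦ : Measurable fun p : α × E => ∫ y, f p.1 (Fin.cons p.2 y)
          ∂(Measure.pi fun i => κ (g p.1 i.succ)) := by
        refine measurable_pi_kernel_integral (α := α × E) κ N
          (fun (p : α × E) (y : Fin N → E) => f p.1 (Fin.cons p.2 y)) (fun (p : α × E) i => g p.1 i.succ) C ?_ ?_ ?_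
        · exact hf.comp ((measurable_fst.comp measurable_fst).prodMk
            (measurable_finCons.comp ((measurable_snd.comp measurable_fst).prodMk
              measurable_snd)))
        · exact measurable_pi_iff.2 fun i =>
            (measurable_pi_apply i.succ).comp (hg.comp measurable_fst)
        · exact fun p y => hC p.1 _
      have hrw : (fun a => ∫ y, f a y ∂(Measure.pi fun i => κ (g a i)))
          = fun a => ∫ t, (fun p : α × E => ∫ y, f p.1 (Fin.cons p.2 y)
              ∂(Measure.pi fun i => κ (g p.1 i.succ))) (a, t)
              ∂(κ.comap (fun a => g a 0) hg0) a := by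
        funext a
        rw [Kernel.comap_apply]
        exact integral_pi_succ (fun i => κ (g a i)) (hf.of_uncurry_left) (fun y => hC a y)
      rw [hrw]
      exact (hΦ.stronglyMeasurable.integral_kernel_prod_right').measurable

lemma eLpNorm_two_eq {α : Type*} [MeasurableSpace α] (ν : Measure α) (f : α → ℝ) :
    eLpNorm f 2 ν = (∫⁻ x, (‖f x‖₊ : ℝ≥0∞) ^ (2:ℝ) ∂ν) ^ ((1:ℝ)/2) := by
  rw [eLpNorm_eq_lintegral_rpow_enorm_toReal two_ne_zero ENNReal.ofNat_ne_top]
  norm_num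
  rfl

lemma sq_eLpNorm_two {α : Type*} [MeasurableSpace α] (ν : Measure α) (f : α → ℝ) :
    eLpNorm f 2 ν ^ (2:ℝ) = ∫⁻ x, (‖f x‖₊ : ℝ≥0∞) ^ (2:ℝ) ∂ν := by
  rw [eLpNorm_two_eq, ← ENNReal.rpow_mul]
  norm_num

lemma eLpNorm_fourThirds_eq {α : Type*} [MeasurableSpace α] (ν : Measure α) (f : α → ℝ) :
    eLpNorm f (4/3 : ℝ≥0∞) ν
      = (∫⁻ x, (‖f x‖₊ : ℝ≥0∞) ^ (4/3 : ℝ) ∂ν) ^ ((3:ℝ)/4) := by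
  rw [eLpNorm_eq_lintegral_rpow_enorm_toReal (by norm_num)
    (ENNReal.div_lt_top (by norm_num) (by norm_num)).ne]
  norm_num [ENNReal.toReal_div]
  rfl

lemma tensor_main (E : Type) [MeasurableSpace E] (μ : Measure E) [IsProbabilityMeasure μ]
    (κ : Kernel E E) [IsMarkovKernel κ]
    (h : ∀ g : E → ℝ, BddMeasurableFn g →
      eLpNorm (fun x => ∫ y, g y ∂(κ x)) 2 μ ≤ eLpNorm g (4 / 3 : ℝ≥0∞) μ) :
    ∀ N : ℕ, ∀ G : (Fin N → E) → ℝ, BddMeasurableFn G →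
      eLpNorm (fun x : Fin N → E => ∫ y, G y ∂(Measure.pi fun i => κ (x i))) 2
          (Measure.pi fun _ : Fin N => μ)
        ≤ eLpNorm G (4 / 3 : ℝ≥0∞) (Measure.pi fun _ : Fin N => μ) := by
  intro N
  induction N with
  | zero =>
    intro G hG
    have h1 : (fun x : Fin 0 → E => ∫ y, G y ∂(Measure.pi fun i => κ (x i)))
        = fun _ => G default := by
      funext x
      have h2 : (fun y => G y) = fun _ => G default :=
        funext fun y => by rw [Subsingleton.elim y default]
      rw [h2, integral_const]
      simp
    rw [h1]
    have h2 : G = fun _ => G default := funext fun y => by rw [Subsingleton.elim y default]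
    conv_rhs => rw [h2]
    rw [eLpNorm_const _ two_ne_zero (IsProbabilityMeasure.ne_zero _),
      eLpNorm_const _ (by norm_num) (IsProbabilityMeasure.ne_zero _)]
    simp
  | succ N ih =>
    intro G hG
    obtain ⟨hGm, C0, hC0⟩ := hG
    set C := max C0 0 with hCdef
    have hGC : ∀ x, |G x| ≤ C := fun x => (hC0 x).trans (le_max_left _ _)
    set νN : Measure (Fin N → E) := Measure.pi fun _ : Fin N => μ with hνN
    set ν' : Measure (Fin (N + 1) → E) := Measure.pi fun _ : Fin (N + 1) => μ with hν'
    set F : (Fin N → E) → E → ℝ :=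
      fun x' s => ∫ y, G (Fin.cons s y) ∂(Measure.pi fun i => κ (x' i)) with hF
    set T : (Fin (N + 1) → E) → ℝ :=
      fun x => ∫ y, G y ∂(Measure.pi fun i => κ (x i)) with hT
    -- measurability of F (jointly)
    have hFm : Measurable (Function.uncurry F) := by
      refine measurable_pi_kernel_integral (α := (Fin N → E) × E) κ N
        (fun p y => G (Fin.cons p.2 y)) (fun p => p.1) C ?_ ?_ ?_
      · exact hGm.comp (measurable_finCons.comp
          ((measurable_snd.comp measurable_fst).prodMk measurable_snd))
      · exact measurable_fst
      · exact fun p y => hGC _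
    have hFb : ∀ x' s, |F x' s| ≤ C := fun x' s =>
      abs_integral_le_bdd (hGm.comp (measurable_finCons.comp
        (measurable_const.prodMk measurable_id))) (fun y => hGC _)
    have hTm : Measurable T := by
      refine measurable_pi_kernel_integral (α := Fin (N + 1) → E) κ (N + 1)
        (fun _ y => G y) id C (hGm.comp measurable_snd) measurable_id (fun a y => hGC y)
    have hTcons : ∀ (t : E) (x' : Fin N → E),
        T (Fin.cons t x') = ∫ s, F x' s ∂(κ t) := by
      intro t x'
      show (∫ y, G y ∂(Measure.pi fun i => κ ((Fin.cons t x' : Fin (N + 1) → E) i))) = _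
      rw [integral_pi_succ (fun i => κ ((Fin.cons t x' : Fin (N + 1) → E) i)) hGm hGC]
      simp only [Fin.cons_zero, Fin.cons_succ]
      rfl
    -- joint measurability of (t, x') ↦ ∫ s, F x' s ∂ κ t
    have hK : Measurable fun q : E × (Fin N → E) => ∫ s, F q.2 s ∂(κ q.1) := by
      have hm1 : Measurable fun p : (E × (Fin N → E)) × E => F p.1.2 p.2 :=
        hFm.comp ((measurable_snd.comp measurable_fst).prodMk measurable_snd)
      have := (hm1.stronglyMeasurable.integral_kernel_prod_right'
        (κ := κ.comap Prod.fst measurable_fst)).measurable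
      simpa [Kernel.comap_apply] using this
    -- the three main quantities
    set L := ∫⁻ x, (‖T x‖₊ : ℝ≥0∞) ^ (2:ℝ) ∂ν' with hL
    set A := ∫⁻ x', (∫⁻ s, (‖F x' s‖₊ : ℝ≥0∞) ^ ((4:ℝ)/3) ∂μ) ^ ((3:ℝ)/2) ∂νN with hA
    set B := ∫⁻ x, (‖G x‖₊ : ℝ≥0∞) ^ ((4:ℝ)/3) ∂ν' with hB
    -- Step 1 : L ≤ A
    have hLA : L ≤ A := by
      have h0 : L = ∫⁻ t, ∫⁻ x', (‖∫ s, F x' s ∂(κ t)‖₊ : ℝ≥0∞) ^ (2:ℝ) ∂νN ∂μ := by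
        rw [hL, hν',
          lintegral_pi_succ (fun _ : Fin (N + 1) => μ)
            (hTm.nnnorm.coe_nnreal_ennreal.pow_const _)]
        refine lintegral_congr fun t => lintegral_congr fun x' => ?_
        rw [hTcons t x']
      have hswap : (∫⁻ t, ∫⁻ x', (‖∫ s, F x' s ∂(κ t)‖₊ : ℝ≥0∞) ^ (2:ℝ) ∂νN ∂μ)
          = ∫⁻ x', ∫⁻ t, (‖∫ s, F x' s ∂(κ t)‖₊ : ℝ≥0∞) ^ (2:ℝ) ∂μ ∂νN := by
        exact lintegral_lintegral_swap
          ((hK.nnnorm.coe_nnreal_ennreal.pow_const _).aemeasurable)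
      have hpoint : ∀ x' : Fin N → E,
          (∫⁻ t, (‖∫ s, F x' s ∂(κ t)‖₊ : ℝ≥0∞) ^ (2:ℝ) ∂μ)
            ≤ (∫⁻ s, (‖F x' s‖₊ : ℝ≥0∞) ^ ((4:ℝ)/3) ∂μ) ^ ((3:ℝ)/2) := by
        intro x'
        have hFx : BddMeasurableFn (F x') := ⟨hFm.of_uncurry_left, C, fun s => hFb x' s⟩
        have hh := h (F x') hFx
        calc ∫⁻ t, (‖∫ s, F x' s ∂(κ t)‖₊ : ℝ≥0∞) ^ (2:ℝ) ∂μ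
            = eLpNorm (fun t => ∫ s, F x' s ∂(κ t)) 2 μ ^ (2:ℝ) :=
              (sq_eLpNorm_two μ _).symm
          _ ≤ eLpNorm (F x') (4/3 : ℝ≥0∞) μ ^ (2:ℝ) :=
              ENNReal.rpow_le_rpow hh (by norm_num)
          _ = ((∫⁻ s, (‖F x' s‖₊ : ℝ≥0∞) ^ ((4:ℝ)/3) ∂μ) ^ ((3:ℝ)/4)) ^ (2:ℝ) := by
              rw [eLpNorm_fourThirds_eq]
          _ = (∫⁻ s, (‖F x' s‖₊ : ℝ≥0∞) ^ ((4:ℝ)/3) ∂μ) ^ ((3:ℝ)/2) := by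
              rw [← ENNReal.rpow_mul]
              norm_num
      rw [h0, hswap]
      exact lintegral_mono hpoint
    -- Step 2 : Minkowski
    have hpq : (3/2 : ℝ).HolderConjugate 3 := ⟨by norm_num, by norm_num, by norm_num⟩
    have hmink : A ^ ((2:ℝ)/3)
        ≤ ∫⁻ s, (∫⁻ x', ((‖F x' s‖₊ : ℝ≥0∞) ^ ((4:ℝ)/3)) ^ ((3:ℝ)/2) ∂νN) ^ ((2:ℝ)/3) ∂μ := by
      have hfm : Measurable (Function.uncurry
          fun (x' : Fin N → E) (s : E) => (‖F x' s‖₊ : ℝ≥0∞) ^ ((4:ℝ)/3)) :=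
        hFm.nnnorm.coe_nnreal_ennreal.pow_const _
      have hCb : ∀ (x' : Fin N → E) (s : E),
          (‖F x' s‖₊ : ℝ≥0∞) ^ ((4:ℝ)/3) ≤ (C.toNNReal ^ ((4:ℝ)/3) : ℝ≥0) := by
        intro x' s
        have h1 : (‖F x' s‖₊ : ℝ≥0∞) ≤ (C.toNNReal : ℝ≥0∞) := by
          rw [ENNReal.coe_le_coe, ← NNReal.coe_le_coe]
          simp only [coe_nnnorm, Real.norm_eq_abs]
          exact (hFb x' s).trans (Real.le_coe_toNNReal C)
        calc (‖F x' s‖₊ : ℝ≥0∞) ^ ((4:ℝ)/3)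
            ≤ (C.toNNReal : ℝ≥0∞) ^ ((4:ℝ)/3) := ENNReal.rpow_le_rpow h1 (by norm_num)
          _ = ((C.toNNReal ^ ((4:ℝ)/3) : ℝ≥0) : ℝ≥0∞) :=
              (ENNReal.coe_rpow_of_nonneg _ (by norm_num)).symm
      have := minkowski_lintegral νN μ hpq hfm (C.toNNReal ^ ((4:ℝ)/3)) hCb
      have h23 : (1:ℝ)/(3/2) = 2/3 := by norm_num
      rw [h23] at this
      have h32 : ((3:ℝ)/2) = (3/2 : ℝ) := rfl
      exact this
    -- Step 3 : pointwise in s, apply ih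
    have hstep3 : ∀ s : E,
        (∫⁻ x', ((‖F x' s‖₊ : ℝ≥0∞) ^ ((4:ℝ)/3)) ^ ((3:ℝ)/2) ∂νN) ^ ((2:ℝ)/3)
          ≤ ∫⁻ y, (‖G (Fin.cons s y)‖₊ : ℝ≥0∞) ^ ((4:ℝ)/3) ∂νN := by
      intro s
      have hGs : BddMeasurableFn fun y => G (Fin.cons s y) :=
        ⟨hGm.comp (measurable_finCons.comp (measurable_const.prodMk measurable_id)),
          C, fun y => hGC _⟩
      have hihs := ih (fun y => G (Fin.cons s y)) hGs
      have hFeq : (fun x' => ∫ y, G (Fin.cons s y) ∂(Measure.pi fun i => κ (x' i)))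
          = fun x' => F x' s := rfl
      rw [hFeq] at hihs
      have hexp : ∀ x' : Fin N → E,
          ((‖F x' s‖₊ : ℝ≥0∞) ^ ((4:ℝ)/3)) ^ ((3:ℝ)/2) = (‖F x' s‖₊ : ℝ≥0∞) ^ (2:ℝ) := by
        intro x'
        rw [← ENNReal.rpow_mul]
        norm_num
      calc (∫⁻ x', ((‖F x' s‖₊ : ℝ≥0∞) ^ ((4:ℝ)/3)) ^ ((3:ℝ)/2) ∂νN) ^ ((2:ℝ)/3)
          = (∫⁻ x', (‖F x' s‖₊ : ℝ≥0∞) ^ (2:ℝ) ∂νN) ^ ((2:ℝ)/3) := by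
            rw [lintegral_congr hexp]
        _ = (eLpNorm (fun x' => F x' s) 2 νN ^ (2:ℝ)) ^ ((2:ℝ)/3) := by
            rw [sq_eLpNorm_two]
        _ = eLpNorm (fun x' => F x' s) 2 νN ^ ((4:ℝ)/3) := by
            rw [← ENNReal.rpow_mul]; norm_num
        _ ≤ eLpNorm (fun y => G (Fin.cons s y)) (4/3 : ℝ≥0∞) νN ^ ((4:ℝ)/3) :=
            ENNReal.rpow_le_rpow hihs (by norm_num)
        _ = ((∫⁻ y, (‖G (Fin.cons s y)‖₊ : ℝ≥0∞) ^ ((4:ℝ)/3) ∂νN) ^ ((3:ℝ)/4)) ^ ((4:ℝ)/3) := by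
            rw [eLpNorm_fourThirds_eq]
        _ = ∫⁻ y, (‖G (Fin.cons s y)‖₊ : ℝ≥0∞) ^ ((4:ℝ)/3) ∂νN := by
            rw [← ENNReal.rpow_mul]; norm_num
    -- Step 4 : reassemble B
    have hAB : A ^ ((2:ℝ)/3) ≤ B := by
      refine hmink.trans ?_
      refine le_trans (lintegral_mono hstep3) ?_
      rw [hB, hν', lintegral_pi_succ (fun _ : Fin (N + 1) => μ)
        (hGm.nnnorm.coe_nnreal_ennreal.pow_const _)]
    -- final chain
    calc eLpNorm T 2 ν' = L ^ ((1:ℝ)/2) := by rw [eLpNorm_two_eq, hL]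
      _ ≤ A ^ ((1:ℝ)/2) := ENNReal.rpow_le_rpow hLA (by norm_num)
      _ = (A ^ ((2:ℝ)/3)) ^ ((3:ℝ)/4) := by rw [← ENNReal.rpow_mul]; norm_num
      _ ≤ B ^ ((3:ℝ)/4) := ENNReal.rpow_le_rpow hAB (by norm_num)
      _ = eLpNorm G (4/3 : ℝ≥0∞) ν' := by
          rw [eLpNorm_fourThirds_eq, hB]

end

/-- (Tensorization of hypercontractivity.)  If a Markov kernel `κ` on `E`
satisfies `‖κ g‖_{L²(μ)} ≤ ‖g‖_{L^{4/3}(μ)}` for every bounded measurable `g`, then for every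
`N ≥ 1` the `N`-fold product kernel `κ^{⊗N}`, sending `x` to `κ(x₁,·) ⊗ ⋯ ⊗ κ(x_N,·)`,
satisfies `‖κ^{⊗N} G‖_{L²(μ^{⊗N})} ≤ ‖G‖_{L^{4/3}(μ^{⊗N})}` for every bounded measurable `G`. -/
theorem statement_3 (E : Type) [MeasurableSpace E] (μ : Measure E) [IsProbabilityMeasure μ]
    (κ : Kernel E E) [IsMarkovKernel κ]
    (h : ∀ g : E → ℝ, BddMeasurableFn g →
      eLpNorm (fun x => ∫ y, g y ∂(κ x)) 2 μ ≤ eLpNorm g (4 / 3 : ℝ≥0∞) μ) :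
    ∀ N : ℕ, 1 ≤ N → ∀ G : (Fin N → E) → ℝ, BddMeasurableFn G →
      eLpNorm (fun x : Fin N → E => ∫ y, G y ∂(Measure.pi fun i => κ (x i))) 2
          (Measure.pi fun _ : Fin N => μ)
        ≤ eLpNorm G (4 / 3 : ℝ≥0∞) (Measure.pi fun _ : Fin N => μ) :=
  fun N _ G hG => tensor_main E μ κ h N G hG
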